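/- Let ξ₀, ξ₁, …, ξₙ span a fan, with n ≥ 2. Then there exists an index i with 0 < i < n such that ξ_i = ξ_{i−1} + ξ_{i+1}. -/
import Mathlib


/-- det(ξ,ν) = ξ₁ν₂ − ξ₂ν₁ for ξ, ν ∈ ℤ². -/
def det2 (ξ ν : ℤ × ℤ) : ℤ := ξ.1 * ν.2 - ξ.2 * ν.1

/-- A sequence ξ₀, …, ξₙ of vectors in ℤ² with nonnegative coordinates spans a fan if
ξ₀ = (1,0), ξₙ = (0,1) and det(ξ_{i−1}, ξ_i) = 1 for all 1 ≤ i ≤ n. -/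
def SpansFan (n : ℕ) (ξ : ℕ → ℤ × ℤ) : Prop :=
  (∀ i ≤ n, 0 ≤ (ξ i).1 ∧ 0 ≤ (ξ i).2) ∧
  ξ 0 = (1, 0) ∧ ξ n = (0, 1) ∧
  ∀ i, 1 ≤ i → i ≤ n → det2 (ξ (i - 1)) (ξ i) = 1

/-- If ξ₀, …, ξₙ span a fan and n ≥ 2, then there is an index 0 < i < n with
ξ_i = ξ_{i−1} + ξ_{i+1}. -/
theorem fan_has_sum_vector (n : ℕ) (ξ : ℕ → ℤ × ℤ) (hfan : SpansFan n ξ) (hn : 2 ≤ n) :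
    ∃ i, 0 < i ∧ i < n ∧ ξ i = ξ (i - 1) + ξ (i + 1) := by
  by_contra hcon
  push_neg at hcon
  obtain ⟨hpos, h0, hn1, hdet⟩ := hfan
  set s : ℕ → ℤ := fun i => (ξ i).1 + (ξ i).2 with hs
  -- every vector in the fan has coordinate sum ≥ 1
  have hs1 : ∀ i ≤ n, 1 ≤ s i := by
    intro i hi
    rcases Nat.eq_zero_or_pos i with h | h
    · subst h; simp [hs, h0]
    · have hd := hdet i h hi
      have hp := hpos i hi
      simp only [det2] at hd
      simp only [hs]
      by_contra hlt
      push_neg at hlt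
      have h1 : (ξ i).1 = 0 := by omega
      have h2 : (ξ i).2 = 0 := by omega
      rw [h1, h2] at hd; simp at hd
  -- key: ξ(i-1) + ξ(i+1) = c • ξ i with c = det2 (ξ(i-1)) (ξ(i+1))
  have hkey : ∀ i, 0 < i → i < n →
      (ξ (i-1)).1 + (ξ (i+1)).1 = det2 (ξ (i-1)) (ξ (i+1)) * (ξ i).1 ∧
      (ξ (i-1)).2 + (ξ (i+1)).2 = det2 (ξ (i-1)) (ξ (i+1)) * (ξ i).2 := by
    intro i hi hin
    have h1 := hdet i hi (le_of_lt hin)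
    have h2 := hdet (i+1) (by omega) (by omega)
    have he : i + 1 - 1 = i := by omega
    rw [he] at h2
    simp only [det2] at h1 h2 ⊢
    constructor
    · linear_combination (-(ξ (i-1)).1) * h2 - (ξ (i+1)).1 * h1
    · linear_combination (-(ξ (i-1)).2) * h2 - (ξ (i+1)).2 * h1
  -- convexity: s(i-1) + s(i+1) ≥ 2 s(i)
  have hconv : ∀ i, 0 < i → i < n → 2 * s i ≤ s (i-1) + s (i+1) := by
    intro i hi hin
    obtain ⟨k1, k2⟩ := hkey i hi hin
    set c := det2 (ξ (i-1)) (ξ (i+1)) with hc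
    have hsi := hs1 i (le_of_lt hin)
    have hsm := hs1 (i-1) (by omega)
    have hsp := hs1 (i+1) (by omega)
    have hsum : s (i-1) + s (i+1) = c * s i := by
      simp only [hs]; linarith
    have hc1 : 1 ≤ c := by nlinarith
    have hc2 : c ≠ 1 := by
      intro h
      apply hcon i hi hin
      apply Prod.ext
      · simp [Prod.fst_add]; rw [h] at k1; linarith
      · simp [Prod.snd_add]; rw [h] at k2; linarith
    have : 2 ≤ c := by omega
    nlinarith
  -- s is monotone
  have mono : ∀ i, i < n → s i ≤ s (i+1) := by
    intro i
    induction i with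
    | zero =>
      intro _
      show s 0 ≤ s 1
      have h1 := hs1 1 (by omega)
      have : s 0 = 1 := by simp [hs, h0]
      omega
    | succ k ih =>
      intro hk
      have h1 := ih (by omega)
      have h2 := hconv (k+1) (by omega) hk
      have he : k + 1 - 1 = k := by omega
      rw [he] at h2
      omega
  -- hence s 1 ≤ s n = 1
  have chain : ∀ j, j ≤ n → 1 ≤ j → s 1 ≤ s j := by
    intro j
    induction j with
    | zero => omega
    | succ k ih =>
      intro hk hk1
      rcases Nat.eq_zero_or_pos k with h | h
      · subst h; exact le_refl _
      · exact le_trans (ih (by omega) h) (mono k (by omega))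
  have hsn : s n = 1 := by simp [hs, hn1]
  have hs1' : s 1 = 1 := by
    have := chain n (le_refl _) (by omega)
    have := hs1 1 (by omega)
    omega
  -- compute ξ 1 = (0,1), then det2 (ξ 1) (ξ 2) = 1 forces (ξ 2).1 = -1 < 0
  have hd1 := hdet 1 (by omega) (by omega)
  simp only [det2, h0] at hd1
  have hy1 : (ξ 1).2 = 1 := by simpa using hd1
  have hx1 : (ξ 1).1 = 0 := by
    have := hs1' ; simp only [hs] at this; omega
  have hd2 := hdet 2 (by omega) hn
  simp only [det2] at hd2
  norm_num at hd2
  rw [hx1, hy1] at hd2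
  have := (hpos 2 hn).1
  omega
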